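/- arXiv:1609.09605 — 3 statements merged into one kernel-verified Lean document; each statement's English description precedes it below -/
import Mathlib

section
/- Let a, b be probability vectors in ℝᴺ (a_j, b_j ≥ 0, Σa_j = Σb_j = 1) with |a_j − b_j| ≤ ε for all j, let s ∈ ℝᴺ with 0 < s_j ≤ S, and let L(1),…,L(N) be matrices with ‖L(j)‖_∞ ≤ M. Then ‖Σ_j a_j s_j L(j) − (Σ_j a_j s_j)/(Σ_j b_j s_j) · Σ_j b_j s_j L(j)‖_∞ ≤ 2N·S·M·ε. -/
open Matrix Finset

/-- ‖A‖_∞ : the maximum absolute row sum of a matrix. -/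
noncomputable def rowSumNorm {m : ℕ} (A : Matrix (Fin m) (Fin m) ℝ) : ℝ :=
  ⨆ i, ∑ j, |A i j|

lemma rowSumNorm_nonneg {m : ℕ} (A : Matrix (Fin m) (Fin m) ℝ) : 0 ≤ rowSumNorm A :=
  Real.iSup_nonneg fun _ => Finset.sum_nonneg fun _ _ => abs_nonneg _

lemma row_le_rowSumNorm {m : ℕ} (A : Matrix (Fin m) (Fin m) ℝ) (i : Fin m) :
    ∑ j, |A i j| ≤ rowSumNorm A :=
  le_ciSup (f := fun i => ∑ j, |A i j|) (Set.Finite.bddAbove (Set.finite_range _)) i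

/-- Abstract perturbation bound: for probability vectors a, b with |a_j − b_j| ≤ ε,
sojourn times 0 < s_j ≤ S and matrices with ‖L(j)‖_∞ ≤ M,
‖Σ_j a_j s_j L(j) − (Σ_j a_j s_j)/(Σ_j b_j s_j)·Σ_j b_j s_j L(j)‖_∞ ≤ 2NSMε. -/
theorem probability_perturbation_bound (N m : ℕ)
    (a b : Fin N → ℝ)
    (ha : ∀ j, 0 ≤ a j) (hb : ∀ j, 0 ≤ b j)
    (ha_sum : ∑ j, a j = 1) (hb_sum : ∑ j, b j = 1)
    (ε : ℝ) (hab : ∀ j, |a j - b j| ≤ ε)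
    (s : Fin N → ℝ) (S : ℝ) (hs : ∀ j, 0 < s j) (hsS : ∀ j, s j ≤ S)
    (L : Fin N → Matrix (Fin m) (Fin m) ℝ)
    (M : ℝ) (hL : ∀ j, rowSumNorm (L j) ≤ M) :
    rowSumNorm ((∑ j, (a j * s j) • L j)
        - ((∑ j, a j * s j) / (∑ j, b j * s j)) • ∑ j, (b j * s j) • L j)
      ≤ 2 * N * S * M * ε := by
  have hN : 0 < N := by
    rcases Nat.eq_zero_or_pos N with h | h
    · subst h; simp at ha_sum
    · exact h
  have j0 : Fin N := ⟨0, hN⟩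
  have hε : 0 ≤ ε := le_trans (abs_nonneg _) (hab j0)
  have hS : 0 < S := lt_of_lt_of_le (hs j0) (hsS j0)
  have hM : 0 ≤ M := le_trans (rowSumNorm_nonneg (L j0)) (hL j0)
  set A := ∑ j, a j * s j with hA
  set B := ∑ j, b j * s j with hBdef
  have hB : 0 < B := by
    apply Finset.sum_pos'
    · intro j _; exact mul_nonneg (hb j) (hs j).le
    · by_contra h
      push_neg at h
      have hb0 : ∀ j, b j = 0 := by
        intro j
        have := h j (Finset.mem_univ j)
        nlinarith [hs j, hb j]
      rw [Finset.sum_eq_zero (fun j _ => hb0 j)] at hb_sum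
      norm_num at hb_sum
  set c : Fin N → ℝ := fun j => a j * s j - (A / B) * (b j * s j) with hc
  have hmat : ((∑ j, (a j * s j) • L j) - (A / B) • ∑ j, (b j * s j) • L j)
      = ∑ j, c j • L j := by
    rw [Finset.smul_sum, ← Finset.sum_sub_distrib]
    refine Finset.sum_congr rfl fun j _ => ?_
    rw [smul_smul, ← sub_smul]
  rw [hmat]
  have hrow : rowSumNorm (∑ j, c j • L j) ≤ ∑ j, |c j| * M := by
    apply Real.iSup_le
    · intro i
      have h1 : ∀ k, |(∑ j, c j • L j) i k| ≤ ∑ j, |c j| * |L j i k| := by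
        intro k
        have : (∑ j, c j • L j) i k = ∑ j, c j * L j i k := by
          simp [Matrix.sum_apply]
        rw [this]
        refine le_trans (Finset.abs_sum_le_sum_abs _ _) ?_
        exact le_of_eq (Finset.sum_congr rfl fun j _ => abs_mul _ _)
      calc ∑ k, |(∑ j, c j • L j) i k| ≤ ∑ k, ∑ j, |c j| * |L j i k| :=
            Finset.sum_le_sum fun k _ => h1 k
        _ = ∑ j, |c j| * ∑ k, |L j i k| := by
            rw [Finset.sum_comm]
            exact Finset.sum_congr rfl fun j _ => (Finset.mul_sum _ _ _).symm
        _ ≤ ∑ j, |c j| * M := by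
            refine Finset.sum_le_sum fun j _ => ?_
            exact mul_le_mul_of_nonneg_left
              (le_trans (row_le_rowSumNorm (L j) i) (hL j)) (abs_nonneg _)
    · exact Finset.sum_nonneg fun j _ => mul_nonneg (abs_nonneg _) hM
  have hcbound : ∑ j, |c j| ≤ 2 * N * S * ε := by
    have hterm : ∀ j, |c j| ≤ |a j - b j| * s j + |1 - A / B| * (b j * s j) := by
      intro j
      have hcj : c j = (a j - b j) * s j + (1 - A / B) * (b j * s j) := by
        rw [hc]; ring
      rw [hcj]
      refine le_trans (abs_add_le _ _) ?_
      rw [abs_mul, abs_mul, abs_of_pos (hs j), abs_of_nonneg (mul_nonneg (hb j) (hs j).le)]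
    have h1 : ∑ j, |a j - b j| * s j ≤ N * S * ε := by
      calc ∑ j, |a j - b j| * s j ≤ ∑ _j : Fin N, ε * S := by
            refine Finset.sum_le_sum fun j _ => ?_
            exact mul_le_mul (hab j) (hsS j) (hs j).le hε
        _ = N * S * ε := by simp [Finset.sum_const]; ring
    have h2 : ∑ j, |1 - A / B| * (b j * s j) ≤ N * S * ε := by
      have : ∑ j, |1 - A / B| * (b j * s j) = |1 - A / B| * B := by
        rw [hBdef, Finset.mul_sum]
      rw [this]
      have heq : |1 - A / B| * B = |B - A| := by
        have hq : (1 - A / B) * B = B - A := by field_simp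
        rw [← hq, abs_mul, abs_of_pos hB]
      rw [heq]
      have hBA : |B - A| ≤ ∑ j, |a j - b j| * s j := by
        have : B - A = ∑ j, (b j - a j) * s j := by
          rw [hA, hBdef, ← Finset.sum_sub_distrib]
          exact Finset.sum_congr rfl fun j _ => by ring
        rw [this]
        refine le_trans (Finset.abs_sum_le_sum_abs _ _) ?_
        refine le_of_eq (Finset.sum_congr rfl fun j _ => ?_)
        rw [abs_mul, abs_of_pos (hs j), abs_sub_comm]
      exact le_trans hBA h1
    calc ∑ j, |c j| ≤ ∑ j, (|a j - b j| * s j + |1 - A / B| * (b j * s j)) :=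
          Finset.sum_le_sum fun j _ => hterm j
      _ = (∑ j, |a j - b j| * s j) + ∑ j, |1 - A / B| * (b j * s j) :=
          Finset.sum_add_distrib
      _ ≤ 2 * N * S * ε := by linarith
  calc rowSumNorm (∑ j, c j • L j) ≤ ∑ j, |c j| * M := hrow
    _ = (∑ j, |c j|) * M := by rw [Finset.sum_mul]
    _ ≤ (2 * N * S * ε) * M := mul_le_mul_of_nonneg_right hcbound hM
    _ = 2 * N * S * M * ε := by ring
end

section
/- Let V : [τ_r, τ_{r+1}] → [0,∞) be absolutely continuous and satisfy the differential inequality V'(t) ≤ ρ₁V(t) + ρ₂·sup_{s∈[τ_r,t]}V(s) for a.e. t, with constants ρ₁, ρ₂ ≥ 0 and Δ_r = τ_{r+1} − τ_r. If e^{−ρ₁Δ_r} − ρ₂Δ_r > 0, then sup_{t∈[τ_r,τ_{r+1}]} V(t) ≤ e^{ρ₁Δ_r}(1 − ρ₂Δ_r e^{ρ₁Δ_r})^{-1} V(τ_r). -/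
open Set

private lemma gronwallBound_le_aux {δ K ε x Δ : ℝ} (hδ : 0 ≤ δ) (hK : 0 ≤ K) (hε : 0 ≤ ε)
    (hx0 : 0 ≤ x) (hxΔ : x ≤ Δ) :
    gronwallBound δ K ε x ≤ δ * Real.exp (K * Δ) + ε * Δ * Real.exp (K * Δ) := by
  have hE1 : (1 : ℝ) ≤ Real.exp (K * Δ) :=
    Real.one_le_exp (mul_nonneg hK (hx0.trans hxΔ))
  rcases eq_or_lt_of_le hK with hK0 | hKpos
  · rw [← hK0, gronwallBound_K0]
    simp only [← hK0, zero_mul, Real.exp_zero, mul_one]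
    nlinarith
  · rw [gronwallBound_of_K_ne_0 hKpos.ne']
    have hexp_le : Real.exp (K * x) ≤ Real.exp (K * Δ) :=
      Real.exp_le_exp.2 (by nlinarith)
    have hEpos : 0 < Real.exp (K * x) := Real.exp_pos _
    have h1 : Real.exp (K * x) - 1 ≤ K * x * Real.exp (K * x) := by
      have h := Real.add_one_le_exp (-(K * x))
      rw [Real.exp_neg] at h
      have h' := mul_le_mul_of_nonneg_right h hEpos.le
      rw [inv_mul_cancel₀ hEpos.ne'] at h'
      nlinarith
    have h2 : ε / K * (Real.exp (K * x) - 1) ≤ ε * x * Real.exp (K * x) := by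
      rw [div_mul_eq_mul_div, div_le_iff₀ hKpos]
      calc ε * (Real.exp (K * x) - 1) ≤ ε * (K * x * Real.exp (K * x)) := by
            exact mul_le_mul_of_nonneg_left h1 hε
        _ = ε * x * Real.exp (K * x) * K := by ring
    calc δ * Real.exp (K * x) + ε / K * (Real.exp (K * x) - 1)
        ≤ δ * Real.exp (K * Δ) + ε * x * Real.exp (K * x) := by
          gcongr
      _ ≤ δ * Real.exp (K * Δ) + ε * Δ * Real.exp (K * Δ) := by
          have : ε * x * Real.exp (K * x) ≤ ε * Δ * Real.exp (K * Δ) := by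
            apply mul_le_mul (by nlinarith) hexp_le hEpos.le (mul_nonneg hε (hx0.trans hxΔ))
          linarith

/-- Halanay/Grönwall-type bound: if V ≥ 0 satisfies
V'(t) ≤ ρ₁V(t) + ρ₂·sup_{s∈[τ_r,t]}V(s) on [τ_r,τ_{r+1}] and e^{−ρ₁Δ} − ρ₂Δ > 0 with
Δ = τ_{r+1} − τ_r, then sup V ≤ e^{ρ₁Δ}(1 − ρ₂Δe^{ρ₁Δ})⁻¹ V(τ_r). -/
theorem halanay_type_bound (a b ρ₁ ρ₂ : ℝ) (hab : a < b)
    (hρ₁ : 0 ≤ ρ₁) (hρ₂ : 0 ≤ ρ₂)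
    (V V' : ℝ → ℝ)
    (hVnonneg : ∀ t ∈ Icc a b, 0 ≤ V t)
    (hderiv : ∀ t ∈ Icc a b, HasDerivWithinAt V (V' t) (Icc a b) t)
    (hineq : ∀ t ∈ Icc a b, V' t ≤ ρ₁ * V t + ρ₂ * sSup (V '' Icc a t))
    (hsmall : 0 < Real.exp (-ρ₁ * (b - a)) - ρ₂ * (b - a)) :
    ∀ t ∈ Icc a b,
      V t ≤ Real.exp (ρ₁ * (b - a))
            * (1 - ρ₂ * (b - a) * Real.exp (ρ₁ * (b - a)))⁻¹ * V a := by
  set Δ := b - a with hΔdef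
  have hΔpos : 0 < Δ := sub_pos.2 hab
  have hcont : ContinuousOn V (Icc a b) := fun t ht => (hderiv t ht).continuousWithinAt
  have haI : a ∈ Icc a b := ⟨le_refl a, hab.le⟩
  have hne : (V '' Icc a b).Nonempty := ⟨V a, mem_image_of_mem V haI⟩
  have hbdd : BddAbove (V '' Icc a b) :=
    (isCompact_Icc.image_of_continuousOn hcont).bddAbove
  set M := sSup (V '' Icc a b) with hMdef
  have hVleM : ∀ t ∈ Icc a b, V t ≤ M := fun t ht => le_csSup hbdd (mem_image_of_mem V ht)
  have hVa : 0 ≤ V a := hVnonneg a haI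
  have hMnonneg : 0 ≤ M := hVa.trans (hVleM a haI)
  set E := Real.exp (ρ₁ * Δ) with hEdef
  have hEpos : 0 < E := Real.exp_pos _
  have hEinv : Real.exp (-ρ₁ * Δ) = E⁻¹ := by
    rw [hEdef, ← Real.exp_neg]; ring_nf
  -- smallness : ρ₂ * Δ * E < 1
  have hsm : ρ₂ * Δ * E < 1 := by
    have h1 : ρ₂ * Δ < E⁻¹ := by rw [← hEinv]; linarith
    have := mul_lt_mul_of_pos_right h1 hEpos
    rwa [inv_mul_cancel₀ hEpos.ne'] at this
  have hden : 0 < 1 - ρ₂ * Δ * E := by linarith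
  -- derivative bound
  have bound : ∀ x ∈ Ico a b, V' x ≤ ρ₁ * V x + ρ₂ * M := by
    intro x hx
    refine (hineq x ⟨hx.1, hx.2.le⟩).trans ?_
    have hsub : sSup (V '' Icc a x) ≤ M := by
      exact csSup_le_csSup hbdd ⟨V a, mem_image_of_mem V ⟨le_refl a, hx.1⟩⟩
        (image_mono (Icc_subset_Icc_right hx.2.le))
    nlinarith
  -- Grönwall
  have key : ∀ t ∈ Icc a b, V t ≤ gronwallBound (V a) ρ₁ (ρ₂ * M) (t - a) := by
    apply le_gronwallBound_of_liminf_deriv_right_le hcont ?_ le_rfl bound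
    intro x hx r hr
    have hd : HasDerivWithinAt V (V' x) (Ici x) x :=
      (hderiv x ⟨hx.1, hx.2.le⟩).mono_of_mem_nhdsWithin (Icc_mem_nhdsGE_of_mem hx)
    exact hd.liminf_right_slope_le hr
  -- bound the gronwallBound uniformly
  have key2 : ∀ t ∈ Icc a b, V t ≤ V a * E + ρ₂ * M * Δ * E := by
    intro t ht
    refine (key t ht).trans ?_
    exact gronwallBound_le_aux hVa hρ₁ (mul_nonneg hρ₂ hMnonneg)
      (sub_nonneg.2 ht.1) (by simp [hΔdef]; linarith [ht.2])
  -- sup bound and solve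
  have hMle : M ≤ V a * E + ρ₂ * M * Δ * E := by
    apply csSup_le hne
    rintro y ⟨t, ht, rfl⟩
    exact key2 t ht
  have hfinal : M ≤ E * (1 - ρ₂ * Δ * E)⁻¹ * V a := by
    rw [mul_comm E, mul_assoc, ← div_eq_inv_mul, le_div_iff₀ hden]
    nlinarith
  intro t ht
  exact (hVleM t ht).trans hfinal
end

section
/- Consider the event-triggering condition ‖e(t)‖ ≤ c₀‖z(t)‖ with c₀ > 0, where e(t₀) = 0 at the event time t₀, and suppose ‖ė(t)‖ ≤ a‖z(t)‖ + b‖e(t)‖ and ‖ż(t)‖ ≤ a‖z(t)‖ + b‖e(t)‖ with a, b > 0, and ‖z(t₀)‖ > 0. Then the next time t₁ at which ‖e(t₁)‖ = c₀‖z(t₁)‖ satisfies t₁ − t₀ ≥ τ* for some τ* > 0 depending only on a, b, c₀ (and not on ‖z(t₀)‖). Specifically, the ratio φ(t) = ‖e(t)‖/‖z(t)‖ satisfies φ' ≤ (a + bφ)(1 + φ), φ(t₀) = 0, so t₁ − t₀ is bounded below by the time for the solution of ψ' = (a + bψ)(1 + ψ), ψ(t₀) = 0 to reach c₀. -/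
open Set

/-- Uniform positive lower bound on inter-event times for the event-triggering rule
‖e(t)‖ ≤ c₀‖z(t)‖: under the growth bounds ‖ė‖, ‖ż‖ ≤ a‖z‖ + b‖e‖, with e reset to 0
at the event time t₀ and ‖z(t₀)‖ > 0, any later time t₁ at which ‖e(t₁)‖ = c₀‖z(t₁)‖
satisfies t₁ − t₀ ≥ τ* for some τ* > 0 depending only on a, b, c₀. -/
theorem inter_event_time_lower_bound (n : ℕ) (a b c₀ : ℝ)
    (ha : 0 < a) (hb : 0 < b) (hc₀ : 0 < c₀) :
    ∃ τ : ℝ, 0 < τ ∧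
      ∀ (t₀ : ℝ) (e z e' z' : ℝ → EuclideanSpace ℝ (Fin n)),
        (∀ t ∈ Ici t₀, HasDerivWithinAt e (e' t) (Ici t₀) t) →
        (∀ t ∈ Ici t₀, HasDerivWithinAt z (z' t) (Ici t₀) t) →
        e t₀ = 0 → 0 < ‖z t₀‖ →
        (∀ t ∈ Ici t₀, ‖e' t‖ ≤ a * ‖z t‖ + b * ‖e t‖) →
        (∀ t ∈ Ici t₀, ‖z' t‖ ≤ a * ‖z t‖ + b * ‖e t‖) →
        ∀ t₁, t₀ < t₁ → ‖e t₁‖ = c₀ * ‖z t₁‖ → τ ≤ t₁ - t₀ := by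
  set K : ℝ := a + b with hKdef
  have hK : 0 < K := by positivity
  refine ⟨min 1 (c₀ / ((1 + c₀) * K * Real.exp K)), ?_, ?_⟩
  · have : 0 < c₀ / ((1 + c₀) * K * Real.exp K) := by positivity
    exact lt_min one_pos this
  intro t₀ e z e' z' hde hdz he₀ hz₀ hbe hbz t₁ ht₁ hev
  by_contra hlt
  push_neg at hlt
  set Δ : ℝ := t₁ - t₀ with hΔdef
  have hΔpos : 0 < Δ := sub_pos.mpr ht₁
  have hΔ1 : Δ < 1 := lt_of_lt_of_le hlt (min_le_left _ _)
  have hΔ2 : Δ < c₀ / ((1 + c₀) * K * Real.exp K) :=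
    lt_of_lt_of_le hlt (min_le_right _ _)
  -- pair function
  set f : ℝ → (EuclideanSpace ℝ (Fin n)) × (EuclideanSpace ℝ (Fin n)) :=
    fun t => (e t, z t) with hf
  set f' : ℝ → (EuclideanSpace ℝ (Fin n)) × (EuclideanSpace ℝ (Fin n)) :=
    fun t => (e' t, z' t) with hf'
  have hIcc : Icc t₀ t₁ ⊆ Ici t₀ := Icc_subset_Ici_self
  have hdf : ∀ t ∈ Ici t₀, HasDerivWithinAt f (f' t) (Ici t₀) t :=
    fun t ht => (hde t ht).prodMk (hdz t ht)
  have hcf : ContinuousOn f (Icc t₀ t₁) := fun t ht =>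
    ((hdf t (hIcc ht)).continuousWithinAt).mono hIcc
  have hnormf : ∀ t, ‖f t‖ = max ‖e t‖ ‖z t‖ := fun t => rfl
  have hnormf' : ∀ t, ‖f' t‖ = max ‖e' t‖ ‖z' t‖ := fun t => rfl
  have hdf' : ∀ x ∈ Ico t₀ t₁, HasDerivWithinAt f (f' x) (Ici x) x :=
    fun x hx => (hdf x hx.1).mono (Ici_subset_Ici.mpr hx.1)
  have hfa : ‖f t₀‖ ≤ ‖z t₀‖ := by
    rw [hnormf, he₀, norm_zero]
    exact max_le (le_of_lt hz₀) le_rfl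
  have keybound : ∀ x ∈ Ico t₀ t₁, ‖f' x‖ ≤ K * ‖f x‖ + 0 := by
    intro x hx
    have hx' : x ∈ Ici t₀ := hx.1
    have h1 : ‖e' x‖ ≤ K * ‖f x‖ := by
      calc ‖e' x‖ ≤ a * ‖z x‖ + b * ‖e x‖ := hbe x hx'
        _ ≤ a * ‖f x‖ + b * ‖f x‖ := by
            rw [hnormf]
            gcongr
            exacts [le_max_right _ _, le_max_left _ _]
        _ = K * ‖f x‖ := by ring
    have h2 : ‖z' x‖ ≤ K * ‖f x‖ := by
      calc ‖z' x‖ ≤ a * ‖z x‖ + b * ‖e x‖ := hbz x hx'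
        _ ≤ a * ‖f x‖ + b * ‖f x‖ := by
            rw [hnormf]
            gcongr
            exacts [le_max_right _ _, le_max_left _ _]
        _ = K * ‖f x‖ := by ring
    rw [add_zero, hnormf']
    exact max_le h1 h2
  have gron := norm_le_gronwallBound_of_norm_deriv_right_le hcf hdf' hfa keybound
  -- bound on ‖f x‖ over [t₀, t₁]
  set C : ℝ := K * ‖z t₀‖ * Real.exp (K * Δ) with hCdef
  have hfbound : ∀ x ∈ Ico t₀ t₁, ‖f x‖ ≤ ‖z t₀‖ * Real.exp (K * Δ) := by
    intro x hx
    have := gron x ⟨hx.1, le_of_lt hx.2⟩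
    rw [gronwallBound_ε0] at this
    refine this.trans (mul_le_mul_of_nonneg_left ?_ hz₀.le)
    exact Real.exp_le_exp.mpr (by nlinarith [hx.2.le])
  -- bound on derivatives
  have hderivC : ∀ (g g' : ℝ → EuclideanSpace ℝ (Fin n)),
      (∀ t ∈ Ici t₀, HasDerivWithinAt g (g' t) (Ici t₀) t) →
      (∀ x ∈ Ico t₀ t₁, ‖g' x‖ ≤ C) → g t₀ = 0 → ‖g t₁‖ ≤ C * Δ := by
    intro g g' hdg hbg hg0
    have hcg : ContinuousOn g (Icc t₀ t₁) := fun t ht =>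
      ((hdg t (hIcc ht)).continuousWithinAt).mono hIcc
    have hdg' : ∀ x ∈ Ico t₀ t₁, HasDerivWithinAt g (g' x) (Ici x) x :=
      fun x hx => (hdg x hx.1).mono (Ici_subset_Ici.mpr hx.1)
    have := norm_le_gronwallBound_of_norm_deriv_right_le hcg hdg'
      (by rw [hg0, norm_zero]) (fun x hx => by
        rw [zero_mul, zero_add]; exact hbg x hx) t₁ ⟨le_of_lt ht₁, le_rfl⟩
    rw [gronwallBound_K0] at this
    simp only [zero_add] at this
    rw [hΔdef]
    exact this
  -- apply to e
  have hEbound : ‖e t₁‖ ≤ C * Δ := by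
    refine hderivC e e' hde (fun x hx => ?_) he₀
    calc ‖e' x‖ ≤ a * ‖z x‖ + b * ‖e x‖ := hbe x hx.1
      _ ≤ a * ‖f x‖ + b * ‖f x‖ := by
          rw [hnormf]; gcongr
          exacts [le_max_right _ _, le_max_left _ _]
      _ = K * ‖f x‖ := by ring
      _ ≤ K * (‖z t₀‖ * Real.exp (K * Δ)) := by
          gcongr; exact hfbound x hx
      _ = C := by rw [hCdef]; ring
  -- apply to z - z t₀
  have hZbound : ‖z t₁ - z t₀‖ ≤ C * Δ := by
    refine hderivC (fun t => z t - z t₀) z'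
      (fun t ht => (hdz t ht).sub_const _) (fun x hx => ?_) (by simp)
    calc ‖z' x‖ ≤ a * ‖z x‖ + b * ‖e x‖ := hbz x hx.1
      _ ≤ a * ‖f x‖ + b * ‖f x‖ := by
          rw [hnormf]; gcongr
          exacts [le_max_right _ _, le_max_left _ _]
      _ = K * ‖f x‖ := by ring
      _ ≤ K * (‖z t₀‖ * Real.exp (K * Δ)) := by
          gcongr; exact hfbound x hx
      _ = C := by rw [hCdef]; ring
  -- lower bound on ‖z t₁‖
  have hzlow : ‖z t₀‖ - C * Δ ≤ ‖z t₁‖ := by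
    have := norm_sub_norm_le (z t₀) (z t₁)
    have h2 : ‖z t₀ - z t₁‖ ≤ C * Δ := by rwa [norm_sub_rev]
    linarith
  -- key inequality: c₀ (‖z₀‖ - CΔ) ≤ CΔ
  have hkey : c₀ * (‖z t₀‖ - C * Δ) ≤ C * Δ := by
    calc c₀ * (‖z t₀‖ - C * Δ) ≤ c₀ * ‖z t₁‖ := by gcongr
      _ = ‖e t₁‖ := hev.symm
      _ ≤ C * Δ := hEbound
  -- let u = K Δ exp(K Δ); then C Δ = u ‖z₀‖ and u ≥ c₀/(1+c₀)
  set u : ℝ := K * Δ * Real.exp (K * Δ) with hu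
  have hCu : C * Δ = u * ‖z t₀‖ := by rw [hCdef, hu]; ring
  have hu_ge : c₀ / (1 + c₀) ≤ u := by
    rw [hCu] at hkey
    rw [div_le_iff₀ (by positivity)]
    nlinarith [hz₀]
  -- but u < c₀/(1+c₀) since Δ is small
  have hu_lt : u < c₀ / (1 + c₀) := by
    have hexp : Real.exp (K * Δ) ≤ Real.exp K := by
      apply Real.exp_le_exp.mpr
      nlinarith
    have h1 : u ≤ K * Δ * Real.exp K := by
      rw [hu]; gcongr
    have h2 : K * Δ * Real.exp K < c₀ / (1 + c₀) := by
      rw [lt_div_iff₀ (by positivity)] at hΔ2 ⊢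
      calc K * Δ * Real.exp K * (1 + c₀) = Δ * ((1 + c₀) * K * Real.exp K) := by ring
        _ < c₀ := hΔ2
    exact lt_of_le_of_lt h1 h2
  exact absurd hu_lt (not_lt.mpr hu_ge)
end
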